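/- For a positive integer n and real Y ≥ 1, the volume of the region {(x₁,…,xₙ) ∈ [1,∞)ⁿ : x₁⋯xₙ ≤ Y} equals (-1)ⁿ + Y·∑_{j=0}^{n-1} ((-1)^{n-1-j}/j!)·(log Y)^j. -/

import Mathlib

open MeasureTheory Real

noncomputable def volF (n : ℕ) (Y : ℝ) : ℝ :=
  (-1 : ℝ) ^ n + Y * ∑ j ∈ Finset.range n,
    ((-1 : ℝ) ^ (n - 1 - j) / Nat.factorial j) * Real.log Y ^ j

def volS (n : ℕ) (Y : ℝ) : Set (Fin n → ℝ) :=
  {x : Fin n → ℝ | (∀ i, 1 ≤ x i) ∧ ∏ i, x i ≤ Y}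

lemma volF_contOn (n : ℕ) : ContinuousOn (volF n) {0}ᶜ := by
  apply continuousOn_const.add
  apply continuousOn_id.mul
  apply continuousOn_finset_sum
  intro j _
  exact continuousOn_const.mul (Real.continuousOn_log.pow j)

lemma contAux (n : ℕ) (Y : ℝ) : ContinuousOn (fun t : ℝ => volF n (Y/t)) (Set.Icc 1 Y) := by
  apply (volF_contOn n).comp
  · exact continuousOn_const.div continuousOn_id fun t ht => by
      have := ht.1; positivity
  · intro t ht
    simp only [Set.mem_compl_iff, Set.mem_singleton_iff]
    have h1 : (0:ℝ) < t := lt_of_lt_of_le one_pos ht.1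
    have h2 : (0:ℝ) < Y := lt_of_lt_of_le h1 ht.2
    positivity

lemma ftc (n : ℕ) (Y : ℝ) (hY : 1 ≤ Y) :
    ∫ t in (1:ℝ)..Y, volF n (Y/t)
      = (-1:ℝ)^n * (Y - 1) + Y * ∑ j ∈ Finset.range n,
        ((-1 : ℝ) ^ (n - 1 - j) / Nat.factorial j) * Real.log Y ^ (j+1) / (j+1) := by
  set G : ℝ → ℝ := fun t => (-1:ℝ)^n * t - Y * ∑ j ∈ Finset.range n,
    ((-1 : ℝ) ^ (n - 1 - j) / Nat.factorial j) * (Real.log Y - Real.log t) ^ (j+1) / (j+1)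
    with hG
  have hderiv : ∀ t ∈ Set.uIcc (1:ℝ) Y, HasDerivAt G (volF n (Y/t)) t := by
    intro t ht
    rw [Set.uIcc_of_le hY] at ht
    have ht0 : (0:ℝ) < t := lt_of_lt_of_le one_pos ht.1
    have hlog : Real.log (Y/t) = Real.log Y - Real.log t :=
      Real.log_div (by linarith) ht0.ne'
    have h1 : ∀ j : ℕ, HasDerivAt (fun t => (Real.log Y - Real.log t) ^ (j+1))
        (-((j+1) * (Real.log Y - Real.log t)^j / t)) t := by
      intro j
      have := ((Real.hasDerivAt_log ht0.ne').const_sub (Real.log Y)).fun_pow (j+1)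
      refine this.congr_deriv ?_
      simp only [Nat.add_sub_cancel]
      push_cast; ring
    have hs : HasDerivAt (fun t => ∑ j ∈ Finset.range n,
        ((-1 : ℝ) ^ (n - 1 - j) / Nat.factorial j) * (Real.log Y - Real.log t) ^ (j+1) / (j+1))
        (∑ j ∈ Finset.range n,
          -(((-1 : ℝ) ^ (n - 1 - j) / Nat.factorial j) * ((Real.log Y - Real.log t)^j / t))) t := by
      apply HasDerivAt.fun_sum
      intro j _
      have hj : ((j:ℝ)+1) ≠ 0 := by positivity
      have := ((h1 j).const_mul ((-1:ℝ)^(n-1-j) / (Nat.factorial j : ℝ))).div_const ((j:ℝ)+1)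
      refine this.congr_deriv ?_
      field_simp
    have h2 := ((hasDerivAt_id t).const_mul ((-1:ℝ)^n)).fun_sub (hs.const_mul Y)
    refine h2.congr_deriv ?_
    unfold volF
    rw [hlog, mul_one, Finset.mul_sum, Finset.mul_sum]
    simp only [mul_neg, Finset.sum_neg_distrib, sub_neg_eq_add]
    congr 1
    apply Finset.sum_congr rfl
    intro j _
    ring
  have hint : IntervalIntegrable (fun t => volF n (Y/t)) volume 1 Y := by
    apply ContinuousOn.intervalIntegrable
    rw [Set.uIcc_of_le hY]
    exact contAux n Y
  rw [intervalIntegral.integral_eq_sub_of_hasDerivAt hderiv hint, hG]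
  simp only [Real.log_one, sub_zero, sub_self]
  have hz : ∀ j ∈ Finset.range n, ((-1 : ℝ) ^ (n - 1 - j) / Nat.factorial j)
      * (0:ℝ) ^ (j+1) / (j+1) = 0 := by
    intro j _; simp
  rw [Finset.sum_congr rfl hz]
  simp only [Finset.sum_const_zero, mul_zero, sub_zero]
  ring

lemma alg (n : ℕ) (Y : ℝ) :
    (-1:ℝ)^n * (Y - 1) + Y * ∑ j ∈ Finset.range n,
        ((-1:ℝ)^(n-1-j) / Nat.factorial j) * Real.log Y ^ (j+1) / (j+1)
      = volF (n+1) Y := by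
  unfold volF
  rw [Finset.sum_range_succ']
  have h : ∀ j ∈ Finset.range n,
      ((-1:ℝ)^(n+1-1-(j+1)) / Nat.factorial (j+1)) * Real.log Y ^ (j+1)
      = ((-1:ℝ)^(n-1-j) / Nat.factorial j) * Real.log Y ^ (j+1) / (j+1) := by
    intro j _
    have e1 : n + 1 - 1 - (j+1) = n - 1 - j := by omega
    rw [e1, Nat.factorial_succ]
    push_cast
    rw [mul_comm ((j:ℝ)+1) (Nat.factorial j : ℝ), ← div_div, div_mul_eq_mul_div]
  rw [Finset.sum_congr rfl h]
  have e0 : n + 1 - 1 - 0 = n := by omega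
  rw [e0]
  simp only [Nat.factorial_zero, Nat.cast_one, pow_zero, mul_one, div_one]
  rw [pow_succ]
  ring

lemma volS_meas (n : ℕ) (Y : ℝ) : MeasurableSet (volS n Y) := by
  have h1 : volS n Y
      = (⋂ i, {x : Fin n → ℝ | 1 ≤ x i}) ∩ {x | ∏ i, x i ≤ Y} := by
    ext x; simp [volS, Set.mem_iInter]
  rw [h1]
  exact (MeasurableSet.iInter fun i =>
      measurableSet_le measurable_const (measurable_pi_apply i)).inter
    (measurableSet_le (Finset.measurable_prod _ fun i _ => measurable_pi_apply i)
      measurable_const)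

lemma recursion (n : ℕ) (Y : ℝ) (f : ℝ → ℝ)
    (IH : ∀ Z : ℝ, 1 ≤ Z → volume (volS n Z) = ENNReal.ofReal (f Z)) :
    volume (volS (n+1) Y)
      = ∫⁻ t in Set.Icc (1:ℝ) Y, ENNReal.ofReal (f (Y/t)) := by
  set e := MeasurableEquiv.piFinSuccAbove (fun _ : Fin (n+1) => ℝ) 0 with he
  set T : Set (ℝ × (Fin n → ℝ)) :=
    {p | (1 ≤ p.1 ∧ ∀ i, 1 ≤ p.2 i) ∧ p.1 * ∏ i, p.2 i ≤ Y} with hT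
  have hTmeas : MeasurableSet T := by
    have h1 : T = ({p : ℝ × (Fin n → ℝ) | 1 ≤ p.1} ∩ ⋂ i, {p : ℝ × (Fin n → ℝ) | 1 ≤ p.2 i})
        ∩ {p : ℝ × (Fin n → ℝ) | p.1 * ∏ i, p.2 i ≤ Y} := by
      ext p; simp [hT, Set.mem_iInter, and_assoc]
    rw [h1]
    refine MeasurableSet.inter (MeasurableSet.inter ?_ ?_) ?_
    · exact measurableSet_le measurable_const measurable_fst
    · exact MeasurableSet.iInter fun i =>
        measurableSet_le measurable_const (measurable_snd.eval)
    · exact measurableSet_le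
        (measurable_fst.mul (Finset.measurable_prod _ fun i _ =>
          measurable_snd.eval)) measurable_const
  have hpre : volS (n+1) Y = e ⁻¹' T := by
    ext x
    simp only [volS, Set.mem_setOf_eq, Set.mem_preimage, hT, he,
      MeasurableEquiv.piFinSuccAbove_apply, Fin.forall_iff_succ]
    rw [Fin.prod_univ_succ]
    simp [Fin.succAbove_zero, Fin.tail]
  rw [hpre, (volume_preserving_piFinSuccAbove (fun _ : Fin (n+1) => ℝ) 0).measure_preimage
    hTmeas.nullMeasurableSet]
  rw [show (volume : Measure (ℝ × (Fin n → ℝ))) = (volume : Measure ℝ).prod volume from rfl,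
    Measure.prod_apply hTmeas]
  have hslice : (fun t => volume (Prod.mk t ⁻¹' T))
      = Set.indicator (Set.Icc (1:ℝ) Y) (fun t => ENNReal.ofReal (f (Y/t))) := by
    funext t
    by_cases ht : t ∈ Set.Icc (1:ℝ) Y
    · have ht1 : (1:ℝ) ≤ t := ht.1
      have ht0 : (0:ℝ) < t := lt_of_lt_of_le one_pos ht1
      have hYt : 1 ≤ Y / t := (one_le_div ht0).2 ht.2
      have hset : Prod.mk t ⁻¹' T = volS n (Y/t) := by
        ext y
        simp only [Set.mem_preimage, hT, Set.mem_setOf_eq, volS]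
        constructor
        · rintro ⟨⟨-, h2⟩, h3⟩
          exact ⟨h2, (le_div_iff₀ ht0).2 (by linarith [mul_comm t (∏ i, y i)])⟩
        · rintro ⟨h2, h3⟩
          refine ⟨⟨ht1, h2⟩, ?_⟩
          have := (le_div_iff₀ ht0).1 h3
          linarith [mul_comm (∏ i, y i) t]
      rw [hset, IH _ hYt, Set.indicator_of_mem ht]
    · rw [Set.indicator_of_notMem ht]
      have hset : Prod.mk t ⁻¹' T = ∅ := by
        ext y
        simp only [Set.mem_preimage, hT, Set.mem_setOf_eq, Set.mem_empty_iff_false,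
          iff_false]
        rintro ⟨⟨h1, h2⟩, h3⟩
        rw [Set.mem_Icc, not_and_or] at ht
        rcases ht with h | h
        · exact h h1
        · push_neg at h
          have hprod : (1:ℝ) ≤ ∏ i, y i := by
            simpa using Finset.prod_le_prod (f := fun _ : Fin n => (1:ℝ)) (g := y)
              (fun i _ => zero_le_one) (fun i _ => h2 i)
          nlinarith
      rw [hset]
      simp
  rw [hslice, lintegral_indicator measurableSet_Icc]

lemma key (n : ℕ) (hn : 1 ≤ n) : ∀ Y : ℝ, 1 ≤ Y →
    volume (volS n Y) = ENNReal.ofReal (volF n Y) ∧ 0 ≤ volF n Y := by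
  induction n, hn using Nat.le_induction with
  | base =>
    intro Y hY
    constructor
    · have h : volS 1 Y = (MeasurableEquiv.funUnique (Fin 1) ℝ) ⁻¹' (Set.Icc 1 Y) := by
        ext x
        simp [volS, MeasurableEquiv.funUnique, Fin.forall_fin_one, Set.mem_Icc,
          Fin.prod_univ_one, and_assoc]
      erw [h, (volume_preserving_funUnique (Fin 1) ℝ).measure_preimage
        measurableSet_Icc.nullMeasurableSet, Real.volume_Icc]
      congr 1
      simp [volF]
      ring
    · simp [volF]
      linarith
  | succ n hn IH =>
    intro Y hY
    have IH1 : ∀ Z : ℝ, 1 ≤ Z → volume (volS n Z) = ENNReal.ofReal (volF n Z) :=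
      fun Z hZ => (IH Z hZ).1
    have hnn : ∀ t ∈ Set.Icc (1:ℝ) Y, 0 ≤ volF n (Y/t) := by
      intro t ht
      have ht0 : (0:ℝ) < t := lt_of_lt_of_le one_pos ht.1
      exact (IH (Y/t) ((one_le_div ht0).2 ht.2)).2
    have hIntOn : IntegrableOn (fun t => volF n (Y/t)) (Set.Icc 1 Y) volume :=
      (contAux n Y).integrableOn_compact isCompact_Icc
    have hval : ∫ t in Set.Icc (1:ℝ) Y, volF n (Y/t) = volF (n+1) Y := by
      rw [MeasureTheory.integral_Icc_eq_integral_Ioc,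
        ← intervalIntegral.integral_of_le hY, ftc n Y hY, alg]
    constructor
    · rw [recursion n Y (volF n) IH1,
        ← MeasureTheory.ofReal_integral_eq_lintegral_ofReal hIntOn
          ((ae_restrict_iff' measurableSet_Icc).2 (Filter.Eventually.of_forall hnn)),
        hval]
    · rw [← hval]
      exact MeasureTheory.integral_nonneg_of_ae
        ((ae_restrict_iff' measurableSet_Icc).2 (Filter.Eventually.of_forall hnn))

theorem volume_product_region (n : ℕ) (hn : 1 ≤ n) (Y : ℝ) (hY : 1 ≤ Y) :
    (volume {x : Fin n → ℝ | (∀ i, 1 ≤ x i) ∧ ∏ i, x i ≤ Y}).toReal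
    = (-1 : ℝ) ^ n
      + Y * ∑ j ∈ Finset.range n,
          ((-1 : ℝ) ^ (n - 1 - j) / Nat.factorial j) * Real.log Y ^ j := by
  obtain ⟨h1, h2⟩ := key n hn Y hY
  show (volume (volS n Y)).toReal = volF n Y
  rw [h1, ENNReal.toReal_ofReal h2]
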